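/- Let f : ℝⁿ × (0,∞) → ℝⁿ be continuous in its first variable, and suppose there are constants K̄ ∈ ℝ (K̄ ≠ 0) and K₁ > 0 such that ⟨x − y, f(x,t) − f(y,t)⟩ ≤ K̄(1+t)⁻¹|x − y|² and ⟨x, f(x,t)⟩ ≤ −K₁(1+t)⁻¹|x|² for all x, y ∈ ℝⁿ and t > 0. If 0 < Δt < |K̄|⁻¹, then for every t > 0 and every b ∈ ℝⁿ there exists a unique x ∈ ℝⁿ satisfying x = f(x,t)Δt + b. -/

import Mathlib

open scoped RealInnerProductSpace

private lemma abs_aux {c a d : ℝ} (hc : 0 < c) (h : c * d ^ 2 ≤ a * d) :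
    c * |d| ≤ |a| := by
  rcases eq_or_ne d 0 with rfl | hd
  · simpa using abs_nonneg a
  · have h1 : a * d ≤ |a| * |d| := by
      rw [← abs_mul]; exact le_abs_self _
    have h2 : (0:ℝ) < |d| := abs_pos.2 hd
    nlinarith [sq_abs d]

/-- 1-D surjectivity for strongly monotone continuous functions. -/
private lemma surj_1d {c : ℝ} (hc : 0 < c) (h : ℝ → ℝ) (hcont : Continuous h)
    (hm : ∀ t s, c * (t - s) ^ 2 ≤ (h t - h s) * (t - s)) (z : ℝ) :
    ∃ t, h t = z := by
  set T : ℝ := (|z - h 0| + 1) / c with hT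
  have hT0 : 0 < T := by positivity
  have h1 : h T - h 0 ≥ c * T := by
    have := hm T 0
    have : c * T ^ 2 ≤ (h T - h 0) * T := by simpa using this
    nlinarith
  have h2 : h 0 - h (-T) ≥ c * T := by
    have := hm 0 (-T)
    nlinarith
  have hcT : c * T = |z - h 0| + 1 := by
    rw [hT]; field_simp
  have hzle : z ≤ h T := by
    have := le_abs_self (z - h 0); nlinarith
  have hlez : h (-T) ≤ z := by
    have := neg_abs_le (z - h 0); nlinarith
  have hsub := intermediate_value_Icc (by linarith : (-T) ≤ T) hcont.continuousOn
  obtain ⟨t, _, ht⟩ := hsub ⟨hlez, hzle⟩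
  exact ⟨t, ht⟩

private lemma strong_mono_surj : ∀ (n : ℕ) (c : ℝ), 0 < c →
    ∀ G : (Fin n → ℝ) → (Fin n → ℝ), Continuous G →
    (∀ x y : Fin n → ℝ,
      c * ∑ i, (x i - y i) ^ 2 ≤ ∑ i, (G x i - G y i) * (x i - y i)) →
    ∀ z, ∃ x, G x = z := by
  intro n
  induction n with
  | zero =>
    intro c hc G _ _ z
    exact ⟨z, funext fun i => i.elim0⟩
  | succ n ih =>
    intro c hc G hGc hmono z
    -- snoc is continuous jointly
    have hsnoc : Continuous fun p : (Fin n → ℝ) × ℝ => (Fin.snoc p.1 p.2 : Fin (n+1) → ℝ) := by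
      refine continuous_pi fun i => ?_
      induction i using Fin.lastCases with
      | last => simpa using continuous_snd
      | cast j =>
        have hj : Continuous fun p : (Fin n → ℝ) × ℝ => p.1 j := (continuous_apply j).comp continuous_fst
        simpa using hj
    set h : (Fin n → ℝ) → ℝ → ℝ := fun y t => G (Fin.snoc y t) (Fin.last n) with hh
    have key : ∀ (y : Fin n → ℝ) (t s : ℝ),
        c * (t - s) ^ 2 ≤ (h y t - h y s) * (t - s) := by
      intro y t s
      have := hmono (Fin.snoc y t) (Fin.snoc y s)
      rw [Fin.sum_univ_castSucc, Fin.sum_univ_castSucc] at this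
      simpa [hh] using this
    have hroot : ∀ y : Fin n → ℝ, ∃ t, h y t = z (Fin.last n) := by
      intro y
      refine surj_1d hc (h y) ?_ (key y) _
      exact (continuous_apply _).comp (hGc.comp (hsnoc.comp (Continuous.prodMk_right y)))
    choose φ hφ using hroot
    -- antilipschitz property of h in t
    have hal : ∀ (y : Fin n → ℝ) (t s : ℝ), c * |t - s| ≤ |h y t - h y s| :=
      fun y t s => abs_aux hc (key y t s)
    -- continuity of φ
    have hφcont : Continuous φ := by
      rw [continuous_iff_continuousAt]
      intro y₀
      rw [Metric.continuousAt_iff]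
      intro ε hε
      have hc1 : Continuous fun y => h y (φ y₀) :=
        (continuous_apply _).comp (hGc.comp (hsnoc.comp (continuous_id.prodMk continuous_const)))
      have := (Metric.continuousAt_iff.1 (hc1.continuousAt (x := y₀))) (c * ε) (by positivity)
      obtain ⟨δ, hδ0, hδ⟩ := this
      refine ⟨δ, hδ0, fun {y} hy => ?_⟩
      have h1 := hal y (φ y) (φ y₀)
      rw [hφ y] at h1
      have h2 : dist (h y (φ y₀)) (h y₀ (φ y₀)) < c * ε := hδ hy
      rw [hφ y₀, Real.dist_eq] at h2
      rw [Real.dist_eq]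
      have h3 : |z (Fin.last n) - h y (φ y₀)| = |h y (φ y₀) - z (Fin.last n)| := abs_sub_comm _ _
      rw [h3] at h1
      have hcpos := hc
      nlinarith [abs_nonneg (φ y - φ y₀)]
    -- reduced map
    set H : (Fin n → ℝ) → (Fin n → ℝ) :=
      fun y i => G (Fin.snoc y (φ y)) (Fin.castSucc i) with hH
    have hHc : Continuous H := by
      refine continuous_pi fun i => ?_
      exact (continuous_apply _).comp (hGc.comp (hsnoc.comp (continuous_id.prodMk hφcont)))
    have hHm : ∀ y y' : Fin n → ℝ,
        c * ∑ i, (y i - y' i) ^ 2 ≤ ∑ i, (H y i - H y' i) * (y i - y' i) := by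
      intro y y'
      have := hmono (Fin.snoc y (φ y)) (Fin.snoc y' (φ y'))
      rw [Fin.sum_univ_castSucc, Fin.sum_univ_castSucc] at this
      simp only [Fin.snoc_castSucc, Fin.snoc_last] at this
      have hz : G (Fin.snoc y (φ y)) (Fin.last n) = G (Fin.snoc y' (φ y')) (Fin.last n) := by
        have e1 := hφ y; have e2 := hφ y'
        simp only [hh] at e1 e2
        rw [e1, e2]
      rw [hz] at this
      simp only [sub_self, zero_mul, add_zero] at this
      have hsq : (0:ℝ) ≤ (φ y - φ y') ^ 2 := sq_nonneg _
      simp only [hH]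
      nlinarith
    obtain ⟨y, hy⟩ := ih c hc H hHc hHm (fun i => z (Fin.castSucc i))
    refine ⟨Fin.snoc y (φ y), funext fun i => ?_⟩
    induction i using Fin.lastCases with
    | last => exact hφ y
    | cast j => exact congrFun hy j

private lemma strong_mono_surj_E {n : ℕ} {c : ℝ} (hc : 0 < c)
    (G : EuclideanSpace ℝ (Fin n) → EuclideanSpace ℝ (Fin n)) (hGc : Continuous G)
    (hm : ∀ x y : EuclideanSpace ℝ (Fin n), c * ‖x - y‖ ^ 2 ≤ ⟪x - y, G x - G y⟫)
    (z : EuclideanSpace ℝ (Fin n)) : ∃ x, G x = z := by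
  classical
  set e := EuclideanSpace.equiv (Fin n) ℝ with he
  set G' : (Fin n → ℝ) → (Fin n → ℝ) := fun v => e (G (e.symm v)) with hG'
  have hG'c : Continuous G' := e.continuous.comp (hGc.comp e.symm.continuous)
  have hinner : ∀ x y : EuclideanSpace ℝ (Fin n), ⟪x, y⟫ = ∑ i, x i * y i := by
    intro x y
    simp [PiLp.inner_apply, RCLike.inner_apply, conj_trivial]
    exact Finset.sum_congr rfl fun i _ => mul_comm _ _
  have hnorm : ∀ x y : EuclideanSpace ℝ (Fin n), ‖x - y‖ ^ 2 = ∑ i, (x i - y i) ^ 2 := by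
    intro x y
    rw [← real_inner_self_eq_norm_sq, hinner]
    simp [PiLp.sub_apply, sq]
  have hmono' : ∀ v w : Fin n → ℝ,
      c * ∑ i, (v i - w i) ^ 2 ≤ ∑ i, (G' v i - G' w i) * (v i - w i) := by
    intro v w
    have := hm (e.symm v) (e.symm w)
    rw [hnorm, hinner] at this
    have h1 : ∀ i, (e.symm v : EuclideanSpace ℝ (Fin n)) i = v i := fun i => rfl
    have h2 : ∀ i, (e.symm w : EuclideanSpace ℝ (Fin n)) i = w i := fun i => rfl
    simp only [PiLp.sub_apply, h1, h2] at this
    calc c * ∑ i, (v i - w i) ^ 2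
        ≤ ∑ i, (v i - w i) * (G (e.symm v) i - G (e.symm w) i) := this
      _ = ∑ i, (G' v i - G' w i) * (v i - w i) := by
          refine Finset.sum_congr rfl fun i _ => ?_
          ring_nf
          rfl
  obtain ⟨v, hv⟩ := strong_mono_surj n c hc G' hG'c hmono' (e z)
  refine ⟨e.symm v, ?_⟩
  have : e.symm (G' v) = e.symm (e z) := congrArg e.symm hv
  simpa [hG'] using this

theorem backward_euler_step_wellposed {n : ℕ}
    (f : EuclideanSpace ℝ (Fin n) → ℝ → EuclideanSpace ℝ (Fin n))
    (hf_cont : ∀ t : ℝ, 0 < t → Continuous fun x => f x t)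
    (K : ℝ) (hK : K ≠ 0) (K₁ : ℝ) (hK₁ : 0 < K₁)
    (hf_lip : ∀ (x y : EuclideanSpace ℝ (Fin n)) (t : ℝ), 0 < t →
      ⟪x - y, f x t - f y t⟫ ≤ K * (1 + t)⁻¹ * ‖x - y‖ ^ 2)
    (hf_diss : ∀ (x : EuclideanSpace ℝ (Fin n)) (t : ℝ), 0 < t →
      ⟪x, f x t⟫ ≤ -K₁ * (1 + t)⁻¹ * ‖x‖ ^ 2)
    (Δt : ℝ) (hΔt0 : 0 < Δt) (hΔt : Δt < |K|⁻¹) :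
    ∀ (t : ℝ), 0 < t → ∀ b : EuclideanSpace ℝ (Fin n),
      ∃! x : EuclideanSpace ℝ (Fin n), x = Δt • f x t + b := by
  intro t ht b
  have hKpos : (0:ℝ) < |K| := abs_pos.2 hK
  have hc : 0 < 1 - Δt * |K| := by
    have h := mul_lt_mul_of_pos_right hΔt hKpos
    rw [inv_mul_cancel₀ (ne_of_gt hKpos)] at h
    linarith
  set G : EuclideanSpace ℝ (Fin n) → EuclideanSpace ℝ (Fin n) :=
    fun x => x - Δt • f x t with hG
  have hGc : Continuous G := continuous_id.sub ((hf_cont t ht).const_smul Δt)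
  have hm : ∀ x y : EuclideanSpace ℝ (Fin n),
      (1 - Δt * |K|) * ‖x - y‖ ^ 2 ≤ ⟪x - y, G x - G y⟫ := by
    intro x y
    have h1 : ⟪x - y, G x - G y⟫ = ‖x - y‖ ^ 2 - Δt * ⟪x - y, f x t - f y t⟫ := by
      simp only [hG]
      rw [show (x - Δt • f x t) - (y - Δt • f y t) = (x - y) - Δt • (f x t - f y t) by
        rw [smul_sub]; abel]
      rw [inner_sub_right, real_inner_smul_right, real_inner_self_eq_norm_sq]
    rw [h1]
    have h2 := hf_lip x y t ht
    have h3 : (0:ℝ) < (1 + t)⁻¹ := by positivity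
    have h4 : (1 + t)⁻¹ ≤ 1 := inv_le_one_of_one_le₀ (by linarith)
    have h5 := le_abs_self K
    have hsq := sq_nonneg ‖x - y‖
    have hKb : K * (1 + t)⁻¹ ≤ |K| := by nlinarith [abs_nonneg K]
    have hstep : Δt * ⟪x - y, f x t - f y t⟫ ≤ Δt * |K| * ‖x - y‖ ^ 2 := by
      nlinarith [mul_le_mul_of_nonneg_left h2 hΔt0.le,
        mul_le_mul_of_nonneg_right hKb hsq]
    linarith
  obtain ⟨x, hx⟩ := strong_mono_surj_E hc G hGc hm b
  refine ⟨x, ?_, ?_⟩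
  · exact (sub_eq_iff_eq_add.mp hx).trans (add_comm _ _)
  · intro y hy
    have hGy : G y = b := sub_eq_of_eq_add (hy.trans (add_comm _ _))
    have h0 := hm y x
    rw [hGy, hx, sub_self, inner_zero_right] at h0
    have : ‖y - x‖ ^ 2 ≤ 0 := by nlinarith
    have hz : y - x = 0 := by
      have := sq_nonneg ‖y - x‖
      have hn : ‖y - x‖ = 0 := by nlinarith
      exact norm_eq_zero.mp hn
    exact sub_eq_zero.mp hz
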